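/- Let M, N ⊆ Σ* be languages of finite words with N nonempty-word languages satisfying M·N* = M and N⁺ = N. Then for every ultimately periodic infinite word w, w belongs to M·N^ω if and only if there exist u ∈ M and v ∈ N such that u·v^ω = w. -/

import Mathlib

open Classical

/-- `wpow v n` is the word `v` repeated `n` times. -/
def wpow {α : Type} (v : List α) : ℕ → List α
  | 0 => []
  | n + 1 => wpow v n ++ v

/-- The ultimately periodic infinite word `u·v^ω` (meaningful when `v ≠ []`). -/
def upWord {α : Type} [Inhabited α] (u v : List α) : ℕ → α := fun n =>
  if n < u.length then u.getD n default
  else v.getD ((n - u.length) % v.length) default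

/-- `l` is a prefix of the infinite word `w`. -/
def prefOf {α : Type} [Inhabited α] (l : List α) (w : ℕ → α) : Prop :=
  ∀ i < l.length, w i = l.getD i default

/-- A complete deterministic automaton (no acceptance condition). -/
structure DetAuto (α : Type) : Type 1 where
  State : Type
  [fin : Fintype State]
  init : State
  step : State → α → State

attribute [instance] DetAuto.fin

namespace DetAuto

variable {α : Type}

/-- The state reached from `q` after reading the finite word `w`. -/
def run (A : DetAuto α) (q : A.State) (w : List α) : A.State := w.foldl A.step q

/-- The state reached from the initial state after reading `w`. -/
def eval (A : DetAuto α) (w : List α) : A.State := A.run A.init w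

/-- The (infinite) run of `A` on an infinite word `w`. -/
def runSeq (A : DetAuto α) (w : ℕ → α) : ℕ → A.State
  | 0 => A.init
  | n + 1 => A.step (A.runSeq w n) (w n)

lemma exists_rep (A : DetAuto α) (u v : List α) :
    ∃ i, ∃ j, 1 ≤ j ∧ A.eval (u ++ wpow v i) = A.eval (u ++ wpow v (i + j)) := by
  obtain ⟨a, b, hab, hfab⟩ :=
    Finite.exists_ne_map_eq_of_infinite (fun n : ℕ => A.eval (u ++ wpow v n))
  rcases Nat.lt_or_gt_of_ne hab with h | h
  · exact ⟨a, b - a, by omega, by rw [Nat.add_sub_cancel' h.le]; exact hfab⟩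
  · exact ⟨b, a - b, by omega, by rw [Nat.add_sub_cancel' h.le]; exact hfab.symm⟩

/-- The least `i` in the normalization of `(u,v)` w.r.t. `A`. -/
noncomputable def normI (A : DetAuto α) (u v : List α) : ℕ :=
  Nat.find (A.exists_rep u v)

lemma normI_spec (A : DetAuto α) (u v : List α) :
    ∃ j, 1 ≤ j ∧ A.eval (u ++ wpow v (A.normI u v))
      = A.eval (u ++ wpow v (A.normI u v + j)) :=
  Nat.find_spec (A.exists_rep u v)

/-- The least `j` in the normalization of `(u,v)` w.r.t. `A`. -/
noncomputable def normJ (A : DetAuto α) (u v : List α) : ℕ :=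
  Nat.find (A.normI_spec u v)

/-- The normalization `(x, y) = (u·v^i, v^j)` of `(u,v)` w.r.t. `A`. -/
noncomputable def normalize (A : DetAuto α) (u v : List α) : List α × List α :=
  (u ++ wpow v (A.normI u v), wpow v (A.normJ u v))

/-- The product automaton. -/
def prod (A B : DetAuto α) : DetAuto α where
  State := A.State × B.State
  init := (A.init, B.init)
  step := fun p σ => (A.step p.1 σ, B.step p.2 σ)

end DetAuto

/-- A family of DFAs: a leading automaton and a progress DFA for each of its states. -/
structure FDFA (α : Type) : Type 1 where
  leading : DetAuto α
  pState : leading.State → Type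
  [pFin : ∀ q, Fintype (pState q)]
  pInit : ∀ q, pState q
  pStep : ∀ q, pState q → α → pState q
  pAcc : ∀ q, Set (pState q)

attribute [instance] FDFA.pFin

namespace FDFA

variable {α : Type}

/-- The progress DFA at state `q` accepts the finite word `y`. -/
def progAccept (F : FDFA α) (q : F.leading.State) (y : List α) : Prop :=
  y.foldl (F.pStep q) (F.pInit q) ∈ F.pAcc q

/-- `F` accepts the pair `(u, v)`: with `(x,y)` the normalization of `(u,v)` w.r.t.
the leading automaton, the progress DFA at the state reached on `x` accepts `y`. -/
noncomputable def Accept (F : FDFA α) (u v : List α) : Prop :=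
  F.progAccept (F.leading.eval (F.leading.normalize u v).1) (F.leading.normalize u v).2

/-- `F` is saturated: acceptance of `(u,v)` depends only on the infinite word `u·v^ω`. -/
def Saturated [Inhabited α] (F : FDFA α) : Prop :=
  ∀ u v u' v' : List α, v ≠ [] → v' ≠ [] → upWord u v = upWord u' v' →
    (F.Accept u v ↔ F.Accept u' v')

/-- The complement FDFA: same structure, complemented accepting states. -/
def compl (F : FDFA α) : FDFA α :=
  { F with pAcc := fun q => (F.pAcc q)ᶜ }

end FDFA

/-- `w ∈ M·N^ω`: `w` starts with a word of `M` followed by an infinite concatenation of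
words from `N` (all nonempty, so that the finite concatenations determine `w`). -/
def memOmegaProd {α : Type} [Inhabited α] (M N : Set (List α)) (w : ℕ → α) : Prop :=
  ∃ m ∈ M, ∃ f : ℕ → List α, (∀ n, f n ∈ N) ∧
    ∀ k : ℕ, prefOf (m ++ ((List.range k).map f).flatten) w

section AuxLemmas

variable {α : Type}

lemma wpow_length (v : List α) (k : ℕ) : (wpow v k).length = k * v.length := by
  induction k with
  | zero => simp [wpow]
  | succ n ih => simp [wpow, ih, Nat.succ_mul]

lemma wpow_getD [Inhabited α] (v : List α) (k j : ℕ) (hj : j < k * v.length) :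
    (wpow v k).getD j default = v.getD (j % v.length) default := by
  induction k with
  | zero => omega
  | succ n ih =>
    have hv : 0 < v.length := by by_contra h; simp at h; simp [h] at hj
    have hj2 : j < n * v.length + v.length := by rw [Nat.succ_mul] at hj; exact hj
    by_cases h : j < n * v.length
    · rw [wpow, List.getD_append _ _ _ _ (by rwa [wpow_length])]
      exact ih h
    · rw [wpow, List.getD_append_right _ _ _ _ (by rw [wpow_length]; omega), wpow_length,
        ← Nat.sub_mul_mod (x := j) (k := n) (n := v.length) (by rw [Nat.mul_comm]; omega),
        Nat.mul_comm v.length n, Nat.mod_eq_of_lt (by omega)]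

lemma prefOf_wpow [Inhabited α] (u v : List α) (k : ℕ) :
    prefOf (u ++ wpow v k) (upWord u v) := by
  intro i hi
  rw [List.length_append, wpow_length] at hi
  by_cases h : i < u.length
  · rw [upWord, if_pos h, List.getD_append _ _ _ _ h]
  · rw [upWord, if_neg h, List.getD_append_right _ _ _ _ (by omega)]
    exact (wpow_getD v k (i - u.length) (by omega)).symm

lemma flatten_const (v : List α) (k : ℕ) :
    ((List.range k).map (fun _ => v)).flatten = wpow v k := by
  induction k with
  | zero => simp [wpow]
  | succ n ih =>
    rw [List.range_succ, List.map_append, List.flatten_append, ih]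
    simp [wpow]

lemma flatten_mem_of_closed {N : Language α} (hNplus : N * (KStar.kstar N) = N) :
    ∀ L : List (List α), L ≠ [] → (∀ y ∈ L, y ∈ N) → L.flatten ∈ N := by
  intro L
  induction L with
  | nil => intro h; exact absurd rfl h
  | cons x t ih =>
    intro _ hmem
    rcases eq_or_ne t [] with rfl | ht
    · simpa using hmem x (by simp)
    · have hx : x ∈ N := hmem x (by simp)
      have htN : t.flatten ∈ N := ih ht (fun y hy => hmem y (by simp [hy]))
      have : x ++ t.flatten ∈ N * (KStar.kstar N) := by
        refine Language.append_mem_mul hx ?_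
        exact Language.mem_kstar.mpr ⟨[t.flatten], by simp, by simpa using htN⟩
      rw [hNplus] at this
      simpa using this

lemma flatten_range_add {α : Type} (f : ℕ → List α) (k d : ℕ) :
    ((List.range (k + d)).map f).flatten
      = ((List.range k).map f).flatten ++ ((List.range d).map (fun i => f (k + i))).flatten := by
  induction d with
  | zero => simp
  | succ n ih =>
    rw [show k + (n + 1) = (k + n) + 1 by omega, List.range_succ, List.range_succ]
    simp [ih, List.append_assoc]

lemma exists_uv_of_pref {α : Type} [Inhabited α] (M N : Language α)
    (hN : ∀ w ∈ N, w ≠ []) (hMN : M * (KStar.kstar N) = M)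
    (hNplus : N * (KStar.kstar N) = N) (u v : List α) (hv : v ≠ [])
    (m : List α) (hm : m ∈ M) (f : ℕ → List α) (hf : ∀ n, f n ∈ N)
    (hpref : ∀ k : ℕ, prefOf (m ++ ((List.range k).map f).flatten) (upWord u v))
    (k k' : ℕ) (hkk : k < k')
    (hk : u.length ≤ (m ++ ((List.range k).map f).flatten).length)
    (hmod : (m ++ ((List.range k).map f).flatten).length % v.length
          = (m ++ ((List.range k').map f).flatten).length % v.length) :
    ∃ u' ∈ M, ∃ v' ∈ N, upWord u' v' = upWord u v := by
  have hvl : 0 < v.length := List.length_pos_iff.mpr hv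
  set x : List α := m ++ ((List.range k).map f).flatten with hx
  set v' : List α := ((List.range (k' - k)).map (fun i => f (k + i))).flatten with hv'
  have hsplit : m ++ ((List.range k').map f).flatten = x ++ v' := by
    have h1 := flatten_range_add f k (k' - k)
    rw [show k + (k' - k) = k' by omega] at h1
    rw [hx, hv', h1, List.append_assoc]
  have hxM : x ∈ M := by
    rw [← hMN]
    refine Language.append_mem_mul hm (Language.join_mem_kstar ?_)
    intro y hy
    rcases List.mem_map.mp hy with ⟨i, _, rfl⟩
    exact hf i
  have hv'N : v' ∈ N := by
    refine flatten_mem_of_closed hNplus _ ?_ ?_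
    · simp only [ne_eq, List.map_eq_nil_iff, List.range_eq_nil]
      omega
    · intro y hy
      rcases List.mem_map.mp hy with ⟨i, _, rfl⟩
      exact hf _
  have hlv' : 0 < v'.length := List.length_pos_iff.mpr (hN _ hv'N)
  have hLk' : (m ++ ((List.range k').map f).flatten).length = x.length + v'.length := by
    rw [hsplit, List.length_append]
  have hdvd : v.length ∣ v'.length := by
    have h2 := (Nat.modEq_iff_dvd' (Nat.le_add_right _ _)).mp (hLk' ▸ hmod)
    simpa using h2
  refine ⟨x, hxM, v', hv'N, funext fun n => ?_⟩
  by_cases hn : n < x.length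
  · simp only [upWord]
    rw [if_pos hn]
    exact (hpref k n hn).symm
  · push_neg at hn
    set r := (n - x.length) % v'.length with hrdef
    have hr : r < v'.length := Nat.mod_lt _ hlv'
    have step1 : (x ++ v').getD (x.length + r) default = v'.getD r default := by
      rw [List.getD_append_right _ _ _ _ (Nat.le_add_right _ _)]
      congr 1
      omega
    have step2 := hpref k' (x.length + r)
      (by rw [hsplit]; have : (x ++ v').length = x.length + v'.length := List.length_append; omega)
    rw [hsplit] at step2
    have hmodr : r % v.length = (n - x.length) % v.length := by
      rw [hrdef]
      exact Nat.mod_mod_of_dvd _ hdvd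
    have key : (x.length + r - u.length) % v.length = (n - u.length) % v.length := by
      have e1 : x.length + r - u.length = (x.length - u.length) + r := by omega
      have e2 : n - u.length = (x.length - u.length) + (n - x.length) := by omega
      rw [e1, e2, Nat.add_mod, hmodr, ← Nat.add_mod]
    calc upWord x v' n = v'.getD r default := by
          simp only [upWord]; rw [if_neg (by omega)]
      _ = (x ++ v').getD (x.length + r) default := step1.symm
      _ = upWord u v (x.length + r) := step2.symm
      _ = v.getD ((x.length + r - u.length) % v.length) default := by
          simp only [upWord]; rw [if_neg (by omega)]
      _ = v.getD ((n - u.length) % v.length) default := by rw [key]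
      _ = upWord u v n := by simp only [upWord]; rw [if_neg (by omega)]

end AuxLemmas

/-- If `M·N* = M` and `N⁺ = N` (with `N ⊆ Σ⁺`), then an ultimately
periodic word `w` is in `M·N^ω` iff `w = u·v^ω` for some `u ∈ M`, `v ∈ N`. -/
theorem ultimately_periodic_in_MNomega {α : Type} [Inhabited α]
    (M N : Language α) (hN : ∀ w ∈ N, w ≠ [])
    (hMN : M * (KStar.kstar N) = M) (hNplus : N * (KStar.kstar N) = N) :
    ∀ u v : List α, v ≠ [] →
      (memOmegaProd (M : Set (List α)) (N : Set (List α)) (upWord u v) ↔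
        ∃ u' ∈ M, ∃ v' ∈ N, upWord u' v' = upWord u v) := by
  intro u v hv
  have hvl : 0 < v.length := List.length_pos_iff.mpr hv
  constructor
  · rintro ⟨m, hm, f, hf, hpref⟩
    have hfne : ∀ n, (f n).length ≠ 0 := fun n => by
      simpa [List.length_eq_zero_iff] using hN _ (hf n)
    have hPsucc : ∀ k : ℕ, m ++ ((List.range (k + 1)).map f).flatten
        = (m ++ ((List.range k).map f).flatten) ++ f k := by
      intro k
      simp [List.range_succ]
    have hklen : ∀ k : ℕ, k ≤ (m ++ ((List.range k).map f).flatten).length := by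
      intro k
      induction k with
      | zero => exact Nat.zero_le _
      | succ n ih =>
        have := hfne n
        rw [hPsucc, List.length_append]
        omega
    obtain ⟨a, b, hab, hgab⟩ := Finite.exists_ne_map_eq_of_infinite
      (fun n : ℕ => (⟨(m ++ ((List.range (n + u.length)).map f).flatten).length % v.length,
        Nat.mod_lt _ hvl⟩ : Fin v.length))
    have hgab' := congrArg Fin.val hgab
    simp only at hgab'
    rcases Ne.lt_or_gt hab with h | h
    · exact exists_uv_of_pref M N hN hMN hNplus u v hv m hm f hf hpref
        (a + u.length) (b + u.length) (by omega)
        (le_trans (by omega) (hklen (a + u.length))) hgab'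
    · exact exists_uv_of_pref M N hN hMN hNplus u v hv m hm f hf hpref
        (b + u.length) (a + u.length) (by omega)
        (le_trans (by omega) (hklen (b + u.length))) hgab'.symm
  · rintro ⟨u', hu', v', hv', hEq⟩
    refine ⟨u', hu', fun _ => v', fun n => hv', fun k => ?_⟩
    rw [← hEq, flatten_const]
    exact prefOf_wpow u' v' k
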